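/- As the integer k → ∞, the double sum Σ_{a = ⌈(log k)^2⌉}^{⌊√k⌋} Σ_{k/(a+1) < p ≤ k/a, p prime} ( log p − log((a+1)p − k) ) is O(k/(log k)^2). (Each term is nonnegative, since k/(a+1) < p ≤ k/a implies 0 < (a+1)p − k ≤ p.) -/

import Mathlib

open Finset Filter Real Asymptotics


/-- Stirling-type lower bound: `∑_{j=1}^n log j ≥ n log n - n`. -/
lemma log_factorial_lower (n : ℕ) :
    (n : ℝ) * Real.log n - n ≤ ∑ j ∈ Finset.Icc 1 n, Real.log j := by
  induction n with
  | zero => simp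
  | succ n ih =>
    rw [Finset.sum_Icc_succ_top (by omega : 1 ≤ n + 1)]
    have key : (n : ℝ) * Real.log (n + 1) ≤ n * Real.log n + 1 := by
      rcases Nat.eq_zero_or_pos n with h | h
      · simp [h]
      · have hn : (0 : ℝ) < n := by exact_mod_cast h
        have h1 : Real.log (((n : ℝ) + 1) / n) ≤ ((n : ℝ) + 1) / n - 1 :=
          Real.log_le_sub_one_of_pos (by positivity)
        rw [Real.log_div (by positivity) (ne_of_gt hn)] at h1
        have h2 : (n : ℝ) * (Real.log (n + 1) - Real.log n) ≤ n * (((n : ℝ) + 1) / n - 1) :=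
          mul_le_mul_of_nonneg_left h1 hn.le
        have h3 : (n : ℝ) * (((n : ℝ) + 1) / n - 1) = 1 := by field_simp; ring
        nlinarith
    push_cast
    nlinarith [ih]

/-- `∑_{a=A}^{B} 1/a² ≤ 1/(A-1) - 1/max(A-1,B)` for `A ≥ 2`. -/
lemma sum_inv_sq_aux (A : ℕ) (hA : 2 ≤ A) (B : ℕ) :
    ∑ a ∈ Finset.Icc A B, (1 : ℝ) / (a : ℝ) ^ 2
      ≤ 1 / ((A : ℝ) - 1) - 1 / (max (A - 1) B : ℕ) := by
  induction B with
  | zero =>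
    rw [Finset.Icc_eq_empty (by omega)]
    have : max (A - 1) 0 = A - 1 := by omega
    rw [this, Finset.sum_empty]
    have : ((A - 1 : ℕ) : ℝ) = (A : ℝ) - 1 := by
      push_cast [Nat.cast_sub (by omega : 1 ≤ A)]; ring
    rw [this]; simp
  | succ B ih =>
    by_cases hAB : A ≤ B + 1
    · rw [Finset.sum_Icc_succ_top hAB]
      have hmax1 : max (A - 1) (B + 1) = B + 1 := by omega
      have hmax0 : max (A - 1) B = B := by omega
      rw [hmax1]
      rw [hmax0] at ih
      have hB : (1 : ℝ) ≤ (B : ℝ) := by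
        have : 1 ≤ B := by omega
        exact_mod_cast this
      have key : (1 : ℝ) / ((B : ℝ) + 1) ^ 2 ≤ 1 / B - 1 / ((B : ℝ) + 1) := by
        rw [div_sub_div _ _ (by linarith) (by linarith)]
        rw [div_le_div_iff₀ (by positivity) (by positivity)]
        nlinarith
      push_cast
      push_cast at ih
      linarith
    · rw [Finset.Icc_eq_empty hAB]
      have : max (A - 1) (B + 1) = A - 1 := by omega
      rw [this, Finset.sum_empty]
      have : ((A - 1 : ℕ) : ℝ) = (A : ℝ) - 1 := by
        push_cast [Nat.cast_sub (by omega : 1 ≤ A)]; ring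
      rw [this]; simp

lemma sum_inv_sq_le (A : ℕ) (hA : 2 ≤ A) (B : ℕ) :
    ∑ a ∈ Finset.Icc A B, (1 : ℝ) / (a : ℝ) ^ 2 ≤ 1 / ((A : ℝ) - 1) := by
  have h := sum_inv_sq_aux A hA B
  have h2 : (0 : ℝ) ≤ 1 / (max (A - 1) B : ℕ) := by positivity
  linarith

/-- `(log x)³ ≤ 216 √x` for `x ≥ 1`. -/
lemma log_cube_le (x : ℝ) (hx : 1 ≤ x) : (Real.log x) ^ 3 ≤ 216 * Real.sqrt x := by
  have hx0 : (0 : ℝ) < x := by linarith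
  have h6 : Real.log x ≤ 6 * x ^ (1 / 6 : ℝ) := by
    have h1 : Real.log (x ^ (1 / 6 : ℝ)) = (1 / 6) * Real.log x := Real.log_rpow hx0 _
    have h2 : Real.log (x ^ (1 / 6 : ℝ)) ≤ x ^ (1 / 6 : ℝ) - 1 :=
      Real.log_le_sub_one_of_pos (Real.rpow_pos_of_pos hx0 _)
    have h3 : (0:ℝ) < x ^ (1 / 6 : ℝ) := Real.rpow_pos_of_pos hx0 _
    nlinarith
  have hlog : 0 ≤ Real.log x := Real.log_nonneg hx
  have hcube : (Real.log x) ^ 3 ≤ (6 * x ^ (1 / 6 : ℝ)) ^ 3 := by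
    exact pow_le_pow_left₀ hlog h6 3
  have hrw : (x ^ (1 / 6 : ℝ)) ^ (3 : ℕ) = Real.sqrt x := by
    rw [← Real.rpow_natCast (x ^ (1 / 6 : ℝ)) 3, ← Real.rpow_mul hx0.le]
    rw [Real.sqrt_eq_rpow]
    norm_num
  calc (Real.log x) ^ 3 ≤ (6 * x ^ (1 / 6 : ℝ)) ^ 3 := hcube
    _ = 216 * (x ^ (1 / 6 : ℝ)) ^ (3:ℕ) := by ring
    _ = 216 * Real.sqrt x := by rw [hrw]


/-- Inner sum bound: for `1 ≤ a ≤ k`, the inner sum is at most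
`log k + 4⌊k/(a(a+1))⌋`. -/
lemma inner_bound (k a : ℕ) (ha1 : 1 ≤ a) (hak : a ≤ k) :
    ∑ p ∈ (Finset.range (k + 1)).filter
        (fun p => p.Prime ∧ k < p * (a + 1) ∧ p * a ≤ k),
      (Real.log p - Real.log ((a + 1 : ℝ) * p - k))
    ≤ Real.log k + 4 * ((k / (a * (a + 1)) : ℕ) : ℝ) := by
  set T := (Finset.range (k + 1)).filter
      (fun p => p.Prime ∧ k < p * (a + 1) ∧ p * a ≤ k) with hT
  set c : ℕ := k / (a + 1) + 1 with hc
  set n : ℕ := k / (a * (a + 1)) with hn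
  set g : ℕ → ℝ := fun j => Real.log k - Real.log a - Real.log (1 + j * a) with hg
  have hkc : k + 1 ≤ c * (a + 1) := by
    have : k / (a + 1) < c := by omega
    have := (Nat.div_lt_iff_lt_mul (by omega : 0 < a + 1)).mp this
    omega
  -- basic facts about members of T
  have hmem : ∀ p ∈ T, c ≤ p ∧ p * a ≤ k ∧ k < p * (a + 1) ∧ 2 ≤ p := by
    intro p hp
    simp only [hT, Finset.mem_filter, Finset.mem_range] at hp
    obtain ⟨-, hprime, hlt, hle⟩ := hp
    refine ⟨?_, hle, hlt, hprime.two_le⟩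
    have : k / (a + 1) < p := (Nat.div_lt_iff_lt_mul (by omega)).mpr hlt
    omega
  -- step A: termwise bound
  have stepA : ∀ p ∈ T, Real.log p - Real.log ((a + 1 : ℝ) * p - k) ≤ g (p - c) := by
    intro p hp
    obtain ⟨hpc, hle, hlt, hp2⟩ := hmem p hp
    set j : ℕ := p - c with hj
    have hpj : p = c + j := by omega
    -- (a+1)p - k ≥ 1 + j*a  (in ℕ: k + 1 + j*a ≤ (a+1)*p)
    have keyN : k + 1 + j * a ≤ p * (a + 1) := by
      have h1 : p * (a + 1) = c * (a + 1) + j * (a + 1) := by rw [hpj]; ring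
      nlinarith
    have h2 : (1 : ℝ) + (j : ℝ) * a ≤ (a + 1 : ℝ) * p - k := by
      have : ((k + 1 + j * a : ℕ) : ℝ) ≤ ((p * (a + 1) : ℕ) : ℝ) := by exact_mod_cast keyN
      push_cast at this
      linarith
    have hpos1 : (0 : ℝ) < 1 + (j : ℝ) * a := by positivity
    -- log p ≤ log k - log a
    have hbound1 : Real.log p ≤ Real.log k - Real.log a := by
      have hpa : ((p * a : ℕ) : ℝ) ≤ (k : ℝ) := by exact_mod_cast hle
      have hlogm : Real.log ((p : ℝ) * a) ≤ Real.log k := by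
        apply Real.log_le_log (by positivity)
        push_cast at hpa; linarith
      rw [Real.log_mul (by positivity) (by positivity)] at hlogm
      linarith
    have hbound2 : Real.log (1 + (j : ℝ) * a) ≤ Real.log ((a + 1 : ℝ) * p - k) :=
      Real.log_le_log hpos1 h2
    simp only [hg]
    push_cast
    linarith
  -- step B/C: sum over T ≤ sum over image ≤ sum over range (n+1)
  have hinj : ∀ x ∈ T, ∀ y ∈ T, x - c = y - c → x = y := by
    intro x hx y hy hxy
    have := (hmem x hx).1; have := (hmem y hy).1
    omega
  have stepB : ∑ p ∈ T, (Real.log p - Real.log ((a + 1 : ℝ) * p - k))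
      ≤ ∑ j ∈ T.image (· - c), g j := by
    rw [Finset.sum_image hinj]
    exact Finset.sum_le_sum stepA
  have hsub : T.image (· - c) ⊆ Finset.range (n + 1) := by
    intro j hj
    simp only [Finset.mem_image] at hj
    obtain ⟨p, hp, rfl⟩ := hj
    obtain ⟨hpc, hle, hlt, hp2⟩ := hmem p hp
    rw [Finset.mem_range, Nat.lt_succ_iff, hn]
    rw [Nat.le_div_iff_mul_le (by positivity)]
    -- (p - c) * (a * (a+1)) ≤ k
    zify [hpc]
    nlinarith [hle, hkc, mul_le_mul_of_nonneg_right (Int.ofNat_le.mpr hle)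
        (by positivity : (0:ℤ) ≤ (a:ℤ) + 1),
      mul_le_mul_of_nonneg_right (Int.ofNat_le.mpr hkc) (by positivity : (0:ℤ) ≤ (a:ℤ))]
  have hgnonneg : ∀ j ∈ Finset.range (n + 1), 0 ≤ g j := by
    intro j hj
    rw [Finset.mem_range, Nat.lt_succ_iff] at hj
    have hjk : j * (a * (a + 1)) ≤ k := by
      calc j * (a * (a + 1)) ≤ n * (a * (a + 1)) := by
            exact Nat.mul_le_mul_right _ hj
        _ ≤ k := by rw [hn]; exact Nat.div_mul_le_self _ _
    have hN : a * (1 + j * a) ≤ k := by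
      rcases Nat.eq_zero_or_pos j with h | h
      · simpa [h] using hak
      · nlinarith
    have hR : (a : ℝ) * (1 + (j : ℝ) * a) ≤ (k : ℝ) := by
      have : ((a * (1 + j * a) : ℕ) : ℝ) ≤ (k : ℝ) := by exact_mod_cast hN
      push_cast at this; linarith
    have hlog : Real.log ((a : ℝ) * (1 + (j : ℝ) * a)) ≤ Real.log k :=
      Real.log_le_log (by positivity) hR
    rw [Real.log_mul (by positivity) (by positivity)] at hlog
    simp only [hg]
    linarith
  have stepC : ∑ j ∈ T.image (· - c), g j ≤ ∑ j ∈ Finset.range (n + 1), g j :=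
    Finset.sum_le_sum_of_subset_of_nonneg hsub (fun j hj _ => hgnonneg j hj)
  -- step F: evaluate the bound
  have stepF : ∑ j ∈ Finset.range (n + 1), g j ≤ Real.log k + 4 * n := by
    have hsplit : ∑ j ∈ Finset.range (n + 1), g j
        = (n + 1 : ℝ) * (Real.log k - Real.log a)
          - ∑ j ∈ Finset.range (n + 1), Real.log (1 + j * a) := by
      simp only [hg]
      rw [Finset.sum_sub_distrib, Finset.sum_const, Finset.card_range]
      push_cast
      ring
    have l1 : ∑ j ∈ Finset.Icc 1 n, Real.log ((j : ℝ) * a)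
        ≤ ∑ j ∈ Finset.range (n + 1), Real.log (1 + j * a) := by
      calc ∑ j ∈ Finset.Icc 1 n, Real.log ((j : ℝ) * a)
          ≤ ∑ j ∈ Finset.Icc 1 n, Real.log (1 + (j : ℝ) * a) := by
            apply Finset.sum_le_sum
            intro j hj
            rw [Finset.mem_Icc] at hj
            have hj1 : (1 : ℝ) ≤ (j : ℝ) := by exact_mod_cast hj.1
            have ha1' : (1 : ℝ) ≤ (a : ℝ) := by exact_mod_cast ha1
            apply Real.log_le_log (by nlinarith)
            linarith
        _ ≤ ∑ j ∈ Finset.range (n + 1), Real.log (1 + (j : ℝ) * a) := by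
            apply Finset.sum_le_sum_of_subset_of_nonneg
            · intro j hj
              rw [Finset.mem_Icc] at hj
              rw [Finset.mem_range]
              omega
            · intro j _ _
              apply Real.log_nonneg
              have : (0:ℝ) ≤ (j : ℝ) * a := by positivity
              linarith
    have l2 : ∑ j ∈ Finset.Icc 1 n, Real.log ((j : ℝ) * a)
        = (∑ j ∈ Finset.Icc 1 n, Real.log j) + n * Real.log a := by
      have : ∀ j ∈ Finset.Icc 1 n, Real.log ((j : ℝ) * a)
          = Real.log j + Real.log a := by
        intro j hj
        rw [Finset.mem_Icc] at hj
        have : (1 : ℕ) ≤ j := hj.1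
        rw [Real.log_mul (by exact_mod_cast Nat.one_le_iff_ne_zero.mp this)
          (by exact_mod_cast Nat.one_le_iff_ne_zero.mp ha1)]
      rw [Finset.sum_congr rfl this, Finset.sum_add_distrib, Finset.sum_const,
        Nat.card_Icc]
      simp
    have l3 := log_factorial_lower n
    have hloga : 0 ≤ Real.log a := Real.log_nonneg (by exact_mod_cast ha1)
    -- main estimate: n * log k ≤ n * (log n + 2 log a + 3)
    have l4 : (n : ℝ) * Real.log k ≤ n * Real.log n + 2 * n * Real.log a + 3 * n := by
      rcases Nat.eq_zero_or_pos n with h | h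
      · simp [h]
      · have hn1 : (1 : ℝ) ≤ (n : ℝ) := by exact_mod_cast h
        have hkN : k < 4 * n * (a * a) := by
          have h1 : k < (n + 1) * (a * (a + 1)) :=
            (Nat.div_lt_iff_lt_mul (by positivity : 0 < a * (a + 1))).mp (by omega)
          have e1 : 1 ≤ n := h
          have e2 : a ≤ a * a := Nat.le_mul_of_pos_left a ha1
          have e3 : n * a ≤ n * (a * a) := Nat.mul_le_mul_left n e2
          have e4 : a * a ≤ n * (a * a) := Nat.le_mul_of_pos_left _ e1
          have e5 : a ≤ n * (a * a) := le_trans e2 e4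
          have h2 : (n + 1) * (a * (a + 1)) ≤ 4 * n * (a * a) := by nlinarith [e3, e4, e5]
          omega
        have hk4 : (k : ℝ) ≤ 4 * n * ((a : ℝ) * a) := by
          have : ((k : ℕ) : ℝ) + 1 ≤ ((4 * n * (a * a) : ℕ) : ℝ) := by
            exact_mod_cast hkN
          push_cast at this; linarith
        have hlogk : Real.log k ≤ Real.log (4 * n * ((a:ℝ) * a)) := by
          apply Real.log_le_log
          · have : (1:ℕ) ≤ k := le_trans ha1 hak
            have : (1:ℝ) ≤ (k:ℝ) := by exact_mod_cast this
            linarith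
          · exact hk4
        have ha1' : (1 : ℝ) ≤ (a : ℝ) := by exact_mod_cast ha1
        have hexp : Real.log (4 * (n:ℝ) * ((a:ℝ) * a))
            = Real.log 4 + Real.log n + 2 * Real.log a := by
          rw [show (4 : ℝ) * n * ((a:ℝ) * a) = 4 * ((n:ℝ) * ((a:ℝ) * a)) by ring]
          rw [Real.log_mul (by norm_num) (by positivity),
            Real.log_mul (by positivity) (by positivity),
            Real.log_mul (by positivity) (by positivity)]
          ring
        have hlog4 : Real.log 4 ≤ 3 := by
          have := Real.log_le_sub_one_of_pos (by norm_num : (0:ℝ) < 4)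
          linarith
        have : Real.log k ≤ Real.log n + 2 * Real.log a + 3 := by
          rw [hexp] at hlogk; linarith
        nlinarith
    rw [hsplit]
    have : (n : ℝ) * Real.log n - n + n * Real.log a
        ≤ ∑ j ∈ Finset.range (n + 1), Real.log (1 + (j:ℝ) * a) := by
      rw [l2] at l1; linarith
    nlinarith
  calc ∑ p ∈ T, (Real.log p - Real.log ((a + 1 : ℝ) * p - k))
      ≤ ∑ j ∈ T.image (· - c), g j := stepB
    _ ≤ ∑ j ∈ Finset.range (n + 1), g j := stepC
    _ ≤ Real.log k + 4 * n := stepF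


set_option maxHeartbeats 1600000 in
/-- `Σ_{a=⌈(log k)²⌉}^{⌊√k⌋} Σ_{k/(a+1) < p ≤ k/a, p prime} (log p − log((a+1)p − k))
= O(k/(log k)²)`. Here `k/(a+1) < p ≤ k/a` is expressed as
`k < p * (a+1) ∧ p * a ≤ k`. -/
theorem large_a_tail_bound :
    (fun k : ℕ =>
        ∑ a ∈ Finset.Icc ⌈(Real.log k) ^ 2⌉₊ ⌊Real.sqrt k⌋₊,
          ∑ p ∈ (Finset.range (k + 1)).filter
              (fun p => p.Prime ∧ k < p * (a + 1) ∧ p * a ≤ k),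
            (Real.log p - Real.log ((a + 1 : ℝ) * p - k)))
      =O[atTop] (fun k : ℕ => (k : ℝ) / (Real.log k) ^ 2) := by
  rw [Asymptotics.isBigO_iff]
  refine ⟨224, ?_⟩
  rw [Filter.eventually_atTop]
  refine ⟨8, fun k hk => ?_⟩
  set A := ⌈(Real.log k) ^ 2⌉₊ with hA
  set B := ⌊Real.sqrt k⌋₊ with hB
  have hk1 : (1 : ℝ) ≤ (k : ℝ) := by exact_mod_cast le_trans (by norm_num) hk
  have hk8 : (8 : ℝ) ≤ (k : ℝ) := by exact_mod_cast hk
  have hlog2 : 2 ≤ Real.log k := by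
    rw [Real.le_log_iff_exp_le (by linarith)]
    have h1 : Real.exp 2 = Real.exp 1 * Real.exp 1 := by
      rw [← Real.exp_add]; norm_num
    have := Real.exp_one_lt_d9
    nlinarith [Real.exp_pos 1]
  have hlogpos : (0 : ℝ) < Real.log k := by linarith
  have hsq4 : (4 : ℝ) ≤ (Real.log k) ^ 2 := by nlinarith
  have hA2 : 2 ≤ A := by
    have : 1 < A := Nat.lt_ceil.mpr (by push_cast; nlinarith)
    omega
  have hAc : (Real.log k) ^ 2 ≤ (A : ℝ) := Nat.le_ceil _
  have hBk : B ≤ k := by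
    have h1 : Real.sqrt k ≤ (k : ℝ) := Real.sqrt_le_iff.mpr ⟨by positivity, by nlinarith⟩
    calc B ≤ ⌊(k : ℝ)⌋₊ := Nat.floor_le_floor h1
      _ = k := Nat.floor_natCast k
  -- nonnegativity of each term
  have hterm : ∀ a ∈ Finset.Icc A B, ∀ p ∈ (Finset.range (k + 1)).filter
      (fun p => p.Prime ∧ k < p * (a + 1) ∧ p * a ≤ k),
      0 ≤ Real.log p - Real.log ((a + 1 : ℝ) * p - k) := by
    intro a ha p hp
    simp only [Finset.mem_filter, Finset.mem_range] at hp
    obtain ⟨-, hprime, hlt, hle⟩ := hp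
    rw [Finset.mem_Icc] at ha
    have ha1 : 1 ≤ a := le_trans (by omega) ha.1
    have h1 : ((k : ℕ) : ℝ) < ((p * (a + 1) : ℕ) : ℝ) := by exact_mod_cast hlt
    have h2 : ((p * a : ℕ) : ℝ) ≤ ((k : ℕ) : ℝ) := by exact_mod_cast hle
    push_cast at h1 h2
    have hpos : (0 : ℝ) < (a + 1 : ℝ) * p - k := by nlinarith
    have hup : (a + 1 : ℝ) * p - k ≤ (p : ℝ) := by nlinarith
    have := Real.log_le_log hpos hup
    linarith
  have hnonneg : 0 ≤ ∑ a ∈ Finset.Icc A B,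
      ∑ p ∈ (Finset.range (k + 1)).filter
        (fun p => p.Prime ∧ k < p * (a + 1) ∧ p * a ≤ k),
      (Real.log p - Real.log ((a + 1 : ℝ) * p - k)) :=
    Finset.sum_nonneg fun a ha => Finset.sum_nonneg fun p hp => hterm a ha p hp
  -- step 1: apply inner_bound
  have hS1 : ∑ a ∈ Finset.Icc A B,
      ∑ p ∈ (Finset.range (k + 1)).filter
        (fun p => p.Prime ∧ k < p * (a + 1) ∧ p * a ≤ k),
      (Real.log p - Real.log ((a + 1 : ℝ) * p - k))
      ≤ ∑ a ∈ Finset.Icc A B, (Real.log k + 4 * ((k / (a * (a + 1)) : ℕ) : ℝ)) := by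
    apply Finset.sum_le_sum
    intro a ha
    rw [Finset.mem_Icc] at ha
    exact inner_bound k a (le_trans (by omega) ha.1) (le_trans ha.2 hBk)
  -- step 2: bound the simplified sum
  have hS2 : ∑ a ∈ Finset.Icc A B, (Real.log k + 4 * ((k / (a * (a + 1)) : ℕ) : ℝ))
      = ((Finset.Icc A B).card : ℝ) * Real.log k
        + 4 * ∑ a ∈ Finset.Icc A B, ((k / (a * (a + 1)) : ℕ) : ℝ) := by
    rw [Finset.sum_add_distrib, Finset.sum_const, Finset.mul_sum]
    simp [nsmul_eq_mul]
  have hS3 : ∑ a ∈ Finset.Icc A B, ((k / (a * (a + 1)) : ℕ) : ℝ)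
      ≤ ∑ a ∈ Finset.Icc A B, (k : ℝ) * (1 / (a : ℝ) ^ 2) := by
    apply Finset.sum_le_sum
    intro a ha
    rw [Finset.mem_Icc] at ha
    have ha1 : 1 ≤ a := le_trans (by omega) ha.1
    have ha1' : (1 : ℝ) ≤ (a : ℝ) := by exact_mod_cast ha1
    calc ((k / (a * (a + 1)) : ℕ) : ℝ) ≤ (k : ℝ) / ((a * (a + 1) : ℕ) : ℝ) :=
          Nat.cast_div_le
      _ ≤ (k : ℝ) / (a : ℝ) ^ 2 := by
          apply div_le_div_of_nonneg_left (by positivity) (by positivity)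
          push_cast; nlinarith
      _ = (k : ℝ) * (1 / (a : ℝ) ^ 2) := by ring
  have hS4 : ∑ a ∈ Finset.Icc A B, (k : ℝ) * (1 / (a : ℝ) ^ 2)
      ≤ (k : ℝ) * (1 / ((A : ℝ) - 1)) := by
    rw [← Finset.mul_sum]
    exact mul_le_mul_of_nonneg_left (sum_inv_sq_le A hA2 B) (by positivity)
  have hA1 : (Real.log k) ^ 2 / 2 ≤ (A : ℝ) - 1 := by nlinarith
  have hS5 : (1 : ℝ) / ((A : ℝ) - 1) ≤ 2 / (Real.log k) ^ 2 := by
    rw [div_le_div_iff₀ (by nlinarith) (by positivity)]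
    nlinarith
  have hcard : ((Finset.Icc A B).card : ℝ) ≤ (B : ℝ) := by
    have : (Finset.Icc A B).card = B + 1 - A := Nat.card_Icc A B
    have : (Finset.Icc A B).card ≤ B := by omega
    exact_mod_cast this
  have hBr : (B : ℝ) ≤ Real.sqrt k := Nat.floor_le (Real.sqrt_nonneg _)
  have hsqrt : Real.sqrt k * Real.log k ≤ 216 * ((k : ℝ) / (Real.log k) ^ 2) := by
    rw [show (216 : ℝ) * ((k : ℝ) / (Real.log k) ^ 2) = 216 * (k : ℝ) / (Real.log k) ^ 2 by ring]
    rw [le_div_iff₀ (by positivity)]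
    have hc := log_cube_le k hk1
    have hs : Real.sqrt k * Real.sqrt k = (k : ℝ) := Real.mul_self_sqrt (by positivity)
    have hsn : 0 ≤ Real.sqrt (k : ℝ) := Real.sqrt_nonneg _
    have h3 : Real.sqrt k * (Real.log k) ^ 3 ≤ Real.sqrt k * (216 * Real.sqrt k) :=
      mul_le_mul_of_nonneg_left hc hsn
    nlinarith [h3, hs]
  -- put it together
  have hnorm : ‖(k : ℝ) / (Real.log k) ^ 2‖ = (k : ℝ) / (Real.log k) ^ 2 := by
    rw [Real.norm_eq_abs, abs_of_nonneg (by positivity)]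
  rw [Real.norm_eq_abs, abs_of_nonneg hnonneg, hnorm]
  have hfinal : ((Finset.Icc A B).card : ℝ) * Real.log k
      + 4 * ((k : ℝ) * (2 / (Real.log k) ^ 2)) ≤ 224 * ((k : ℝ) / (Real.log k) ^ 2) := by
    have h1 : ((Finset.Icc A B).card : ℝ) * Real.log k ≤ Real.sqrt k * Real.log k :=
      mul_le_mul_of_nonneg_right (le_trans hcard hBr) hlogpos.le
    have h2 : (k : ℝ) * (2 / (Real.log k) ^ 2) = 2 * ((k : ℝ) / (Real.log k) ^ 2) := by
      ring
    nlinarith [hsqrt]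
  have hmid : (k : ℝ) * (1 / ((A : ℝ) - 1)) ≤ (k : ℝ) * (2 / (Real.log k) ^ 2) :=
    mul_le_mul_of_nonneg_left hS5 (by positivity)
  refine le_trans hS1 ?_
  rw [hS2]
  have hchain := le_trans hS3 (le_trans hS4 hmid)
  linarith [hfinal, hchain]
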